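/- Let k be a field and consider the polynomial ring k[X₁,X₂,X₃,X₄]. The ideal q = (X₄², X₃X₄ − X₂², X₃², X₂X₄ − X₁²) is a primary ideal whose radical equals the maximal ideal m = (X₁, X₂, X₃, X₄), and the quotient ring k[X₁,X₂,X₃,X₄]/q is a finite-dimensional k-vector space of dimension 16 = 2⁴. -/

import Mathlib

abbrev P' (k:Type*) [Field k] := MvPolynomial (Fin 4) k

open MvPolynomial Polynomial

namespace PIE
variable (k : Type*) [Field k]
noncomputable section

-- B1 = k[y3]/(y3^2)
def B1 := AdjoinRoot (Polynomial.X ^ 2 : Polynomial k)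

instance : CommRing (B1 k) := by unfold B1; infer_instance
instance : Algebra k (B1 k) := by unfold B1; infer_instance

def y3 : B1 k := AdjoinRoot.root _

lemma y3_sq : (y3 k) ^ 2 = 0 := by
  have h := AdjoinRoot.mk_self (f := (Polynomial.X ^ 2 : Polynomial k))
  rw [map_pow, AdjoinRoot.mk_X] at h
  exact h

def pb1 : PowerBasis k (B1 k) := AdjoinRoot.powerBasis' (monic_X_pow 2)

lemma pb1_dim : (pb1 k).dim = 2 := natDegree_X_pow 2

instance : Nontrivial (B1 k) :=
  nontrivial_of_ne ((pb1 k).basis ⟨0, by rw [pb1_dim]; norm_num⟩) 0 (Module.Basis.ne_zero _ _)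

-- B2 = B1[y2]/(y2^2)
def B2 := AdjoinRoot (Polynomial.X ^ 2 : Polynomial (B1 k))
instance : CommRing (B2 k) := by unfold B2; infer_instance
instance : Algebra k (B2 k) := by unfold B2; infer_instance
instance : Algebra (B1 k) (B2 k) := by unfold B2; infer_instance
instance : IsScalarTower k (B1 k) (B2 k) := by unfold B2; infer_instance

def y2 : B2 k := AdjoinRoot.root _

lemma y2_sq : (y2 k) ^ 2 = 0 := by
  have h := AdjoinRoot.mk_self (f := (Polynomial.X ^ 2 : Polynomial (B1 k)))
  rw [map_pow, AdjoinRoot.mk_X] at h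
  exact h

def pb2 : PowerBasis (B1 k) (B2 k) := AdjoinRoot.powerBasis' (monic_X_pow 2)

lemma pb2_dim : (pb2 k).dim = 2 := natDegree_X_pow 2

instance : Nontrivial (B2 k) :=
  nontrivial_of_ne ((pb2 k).basis ⟨0, by rw [pb2_dim]; norm_num⟩) 0 (Module.Basis.ne_zero _ _)

-- B3 = B2[y1]/(y1^2 - y2*y3)
def c3 : B2 k := y2 k * algebraMap (B1 k) (B2 k) (y3 k)

def B3 := AdjoinRoot (Polynomial.X ^ 2 - Polynomial.C (c3 k))
instance : CommRing (B3 k) := by unfold B3; infer_instance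
instance : Algebra k (B3 k) := by unfold B3; infer_instance
instance : Algebra (B1 k) (B3 k) := by unfold B3; infer_instance
instance : Algebra (B2 k) (B3 k) := by unfold B3; infer_instance
instance : IsScalarTower k (B2 k) (B3 k) := by unfold B3; infer_instance
instance : IsScalarTower (B1 k) (B2 k) (B3 k) := by unfold B3; infer_instance
instance : IsScalarTower k (B1 k) (B3 k) := by unfold B3; infer_instance

def y1 : B3 k := AdjoinRoot.root _

lemma y1_sq : (y1 k) ^ 2 = algebraMap (B2 k) (B3 k) (c3 k) := by
  have h := AdjoinRoot.mk_self (f := Polynomial.X ^ 2 - Polynomial.C (c3 k))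
  rw [map_sub, map_pow, AdjoinRoot.mk_X, sub_eq_zero] at h
  rw [y1]; erw [h, AdjoinRoot.mk_C]

def pb3 : PowerBasis (B2 k) (B3 k) := AdjoinRoot.powerBasis' (monic_X_pow_sub_C _ two_ne_zero)

lemma pb3_dim : (pb3 k).dim = 2 := by
  have : (Polynomial.X ^ 2 - Polynomial.C (c3 k)).natDegree = 2 := by
    exact natDegree_X_pow_sub_C
  exact this

instance : Nontrivial (B3 k) :=
  nontrivial_of_ne ((pb3 k).basis ⟨0, by rw [pb3_dim]; norm_num⟩) 0 (Module.Basis.ne_zero _ _)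

-- B4 = B3[y0]/(y0^2 - y1*y3)
def c4 : B3 k := y1 k * algebraMap (B1 k) (B3 k) (y3 k)

def B4 := AdjoinRoot (Polynomial.X ^ 2 - Polynomial.C (c4 k))
instance : CommRing (B4 k) := by unfold B4; infer_instance
instance : Algebra k (B4 k) := by unfold B4; infer_instance
instance : Algebra (B1 k) (B4 k) := by unfold B4; infer_instance
instance : Algebra (B2 k) (B4 k) := by unfold B4; infer_instance
instance : Algebra (B3 k) (B4 k) := by unfold B4; infer_instance
instance : IsScalarTower k (B3 k) (B4 k) := by unfold B4; infer_instance
instance : IsScalarTower (B1 k) (B2 k) (B4 k) := by unfold B4; infer_instance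
instance : IsScalarTower (B1 k) (B3 k) (B4 k) := by unfold B4; infer_instance
instance : IsScalarTower (B2 k) (B3 k) (B4 k) := by unfold B4; infer_instance
instance : IsScalarTower k (B2 k) (B4 k) := by unfold B4; infer_instance
instance : IsScalarTower k (B1 k) (B4 k) := by unfold B4; infer_instance

def y0 : B4 k := AdjoinRoot.root _

lemma y0_sq : (y0 k) ^ 2 = algebraMap (B3 k) (B4 k) (c4 k) := by
  have h := AdjoinRoot.mk_self (f := Polynomial.X ^ 2 - Polynomial.C (c4 k))
  rw [map_sub, map_pow, AdjoinRoot.mk_X, sub_eq_zero] at h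
  rw [y0]; erw [h, AdjoinRoot.mk_C]

def pb4 : PowerBasis (B3 k) (B4 k) := AdjoinRoot.powerBasis' (monic_X_pow_sub_C _ two_ne_zero)

lemma pb4_dim : (pb4 k).dim = 2 := natDegree_X_pow_sub_C

end
end PIE

namespace PIE
variable (k : Type*) [Field k]
noncomputable section

def qI : Ideal (P' k) := Ideal.span {(X 3 : P' k) ^ 2, X 2 * X 3 - X 1 ^ 2,
        X 2 ^ 2, X 1 * X 3 - X 0 ^ 2}

def Y : Fin 4 → B4 k :=
  ![y0 k, algebraMap (B3 k) (B4 k) (y1 k), algebraMap (B2 k) (B4 k) (y2 k),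
    algebraMap (B1 k) (B4 k) (y3 k)]

def φ : MvPolynomial (Fin 4) k →ₐ[k] B4 k := aeval (Y k)

lemma φ_g1 : φ k ((X 3 : P' k) ^ 2) = 0 := by
  rw [φ, map_pow, MvPolynomial.aeval_X]
  show (algebraMap (B1 k) (B4 k)) (y3 k) ^ 2 = 0
  rw [← map_pow, y3_sq, map_zero]

lemma φ_g2 : φ k ((X 2 * X 3 - X 1 ^ 2 : P' k)) = 0 := by
  rw [φ, map_sub, map_mul, map_pow, MvPolynomial.aeval_X, MvPolynomial.aeval_X,
    MvPolynomial.aeval_X]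
  show (algebraMap (B2 k) (B4 k)) (y2 k) * (algebraMap (B1 k) (B4 k)) (y3 k) -
    (algebraMap (B3 k) (B4 k)) (y1 k) ^ 2 = 0
  rw [← map_pow, y1_sq, c3, map_mul, map_mul,
    ← IsScalarTower.algebraMap_apply (B2 k) (B3 k) (B4 k),
    ← IsScalarTower.algebraMap_apply (B1 k) (B2 k) (B3 k),
    ← IsScalarTower.algebraMap_apply (B1 k) (B3 k) (B4 k),
    IsScalarTower.algebraMap_apply (B1 k) (B2 k) (B4 k), sub_self]

lemma φ_g3 : φ k ((X 2 : P' k) ^ 2) = 0 := by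
  rw [φ, map_pow, MvPolynomial.aeval_X]
  show (algebraMap (B2 k) (B4 k)) (y2 k) ^ 2 = 0
  rw [← map_pow, y2_sq, map_zero]

lemma φ_g4 : φ k ((X 1 * X 3 - X 0 ^ 2 : P' k)) = 0 := by
  rw [φ, map_sub, map_mul, map_pow, MvPolynomial.aeval_X, MvPolynomial.aeval_X,
    MvPolynomial.aeval_X]
  show (algebraMap (B3 k) (B4 k)) (y1 k) * (algebraMap (B1 k) (B4 k)) (y3 k) -
    (y0 k) ^ 2 = 0
  rw [y0_sq, c4, map_mul, ← IsScalarTower.algebraMap_apply (B1 k) (B3 k) (B4 k), sub_self]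

end
end PIE

namespace PIE
variable (k : Type*) [Field k]
noncomputable section

abbrev ι := (((Fin 2 × Fin 2) × Fin 2) × Fin 2)

def bk2 : Module.Basis (Fin 2 × Fin 2) k (B2 k) :=
  ((pb1 k).basis.reindex (finCongr (pb1_dim k))).smulTower
    ((pb2 k).basis.reindex (finCongr (pb2_dim k)))

def bk3 : Module.Basis ((Fin 2 × Fin 2) × Fin 2) k (B3 k) :=
  (bk2 k).smulTower ((pb3 k).basis.reindex (finCongr (pb3_dim k)))

def bk4 : Module.Basis (ι) k (B4 k) :=
  (bk3 k).smulTower ((pb4 k).basis.reindex (finCongr (pb4_dim k)))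

lemma bk4_apply (a b c d : Fin 2) :
    bk4 k (((a, b), c), d) =
      algebraMap (B1 k) (B4 k) (y3 k ^ (a : ℕ)) * algebraMap (B2 k) (B4 k) (y2 k ^ (b : ℕ)) *
        algebraMap (B3 k) (B4 k) (y1 k ^ (c : ℕ)) * y0 k ^ (d : ℕ) := by
  have e4 : ((pb4 k).basis.reindex (finCongr (pb4_dim k))) d = y0 k ^ (d : ℕ) := by
    rw [Module.Basis.reindex_apply, PowerBasis.basis_eq_pow]
    rfl
  have e3 : ((pb3 k).basis.reindex (finCongr (pb3_dim k))) c = y1 k ^ (c : ℕ) := by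
    rw [Module.Basis.reindex_apply, PowerBasis.basis_eq_pow]
    rfl
  have e2 : ((pb2 k).basis.reindex (finCongr (pb2_dim k))) b = y2 k ^ (b : ℕ) := by
    rw [Module.Basis.reindex_apply, PowerBasis.basis_eq_pow]
    rfl
  have e1 : ((pb1 k).basis.reindex (finCongr (pb1_dim k))) a = y3 k ^ (a : ℕ) := by
    rw [Module.Basis.reindex_apply, PowerBasis.basis_eq_pow]
    rfl
  rw [bk4, Module.Basis.smulTower_apply, bk3, Module.Basis.smulTower_apply, bk2, Module.Basis.smulTower_apply,
    e1, e2, e3, e4, Algebra.smul_def, Algebra.smul_def, Algebra.smul_def, map_mul, map_mul,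
    ← IsScalarTower.algebraMap_apply (B1 k) (B2 k) (B3 k),
    map_mul,
    ← IsScalarTower.algebraMap_apply (B1 k) (B3 k) (B4 k),
    ← IsScalarTower.algebraMap_apply (B2 k) (B3 k) (B4 k)]

end
end PIE

namespace PIE
variable (k : Type*) [Field k]
noncomputable section

abbrev Q := MvPolynomial (Fin 4) k ⧸ qI k

lemma φ_vanish : ∀ f ∈ qI k, φ k f = 0 := by
  intro f hf
  rw [qI] at hf
  refine Submodule.span_induction ?_ ?_ ?_ ?_ hf
  · rintro g (rfl | rfl | rfl | rfl)
    exacts [φ_g1 k, φ_g2 k, φ_g3 k, φ_g4 k]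
  · exact map_zero _
  · intro a b _ _ ha hb; rw [map_add, ha, hb, add_zero]
  · intro a b _ hb; rw [smul_eq_mul, map_mul, hb, mul_zero]

def φbar : Q k →ₐ[k] B4 k := Ideal.Quotient.liftₐ (qI k) (φ k) (φ_vanish k)

def z (i : Fin 4) : Q k := Ideal.Quotient.mk (qI k) (X i)

def v : ι → Q k := fun x =>
  Ideal.Quotient.mk (qI k) (X 3 ^ (x.1.1.1 : ℕ) * X 2 ^ (x.1.1.2 : ℕ) *
    X 1 ^ (x.1.2 : ℕ) * X 0 ^ (x.2 : ℕ))

lemma v_eq (a b c d : Fin 2) : v k (((a, b), c), d) =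
    z k 3 ^ (a : ℕ) * z k 2 ^ (b : ℕ) * z k 1 ^ (c : ℕ) * z k 0 ^ (d : ℕ) := by
  simp only [v, z, map_mul, map_pow]

lemma φbar_v (x : ι) : φbar k (v k x) = bk4 k x := by
  obtain ⟨⟨⟨a, b⟩, c⟩, d⟩ := x
  rw [v, φbar, Ideal.Quotient.liftₐ_apply]; erw [Ideal.Quotient.lift_mk]
  show φ k _ = _
  rw [φ, map_mul, map_mul, map_mul, map_pow, map_pow, map_pow, map_pow,
    MvPolynomial.aeval_X, MvPolynomial.aeval_X, MvPolynomial.aeval_X, MvPolynomial.aeval_X,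
    bk4_apply]
  show (algebraMap (B1 k) (B4 k)) (y3 k) ^ (a : ℕ) * (algebraMap (B2 k) (B4 k)) (y2 k) ^ (b : ℕ) *
      (algebraMap (B3 k) (B4 k)) (y1 k) ^ (c : ℕ) * y0 k ^ (d : ℕ) = _
  rw [← map_pow, ← map_pow, ← map_pow]

lemma v_li : LinearIndependent k (v k) := by
  have h : ⇑(φbar k).toLinearMap ∘ v k = ⇑(bk4 k) := funext fun x => φbar_v k x
  exact LinearIndependent.of_comp (φbar k).toLinearMap (h ▸ (bk4 k).linearIndependent)

end
end PIE

namespace PIE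
variable (k : Type*) [Field k]
noncomputable section

lemma r3 : z k 3 ^ 2 = 0 := by
  rw [z, ← map_pow]
  exact Ideal.Quotient.eq_zero_iff_mem.mpr (Ideal.subset_span (by simp [Set.mem_insert_iff]))

lemma r2 : z k 2 ^ 2 = 0 := by
  rw [z, ← map_pow]
  exact Ideal.Quotient.eq_zero_iff_mem.mpr (Ideal.subset_span (by simp [Set.mem_insert_iff]))

lemma r23 : z k 2 * z k 3 = z k 1 ^ 2 := by
  rw [z, z, z, ← map_pow, ← map_mul, Ideal.Quotient.eq]
  exact Ideal.subset_span (by simp [Set.mem_insert_iff])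

lemma r13 : z k 1 * z k 3 = z k 0 ^ 2 := by
  rw [z, z, z, ← map_pow, ← map_mul, Ideal.Quotient.eq]
  exact Ideal.subset_span (by simp [Set.mem_insert_iff])

def S : Submodule k (Q k) := Submodule.span k (Set.range (v k))

lemma fin2_cases (a : Fin 2) : a = 0 ∨ a = 1 := by omega

lemma vz_mem_0 (a b c d : Fin 2) : v k (((a, b), c), d) * z k 0 ∈ S k := by
  rcases fin2_cases d with rfl | rfl
  · refine Submodule.subset_span ⟨(((a, b), c), 1), ?_⟩
    rw [v_eq, v_eq]
    simp only [Fin.val_zero, Fin.val_one, pow_zero, pow_one]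
    ring
  · rcases fin2_cases a with rfl | rfl
    · rcases fin2_cases c with rfl | rfl
      · refine Submodule.subset_span ⟨(((1, b), 1), 0), ?_⟩
        rw [v_eq, v_eq]
        simp only [Fin.val_zero, Fin.val_one, pow_zero, pow_one]
        linear_combination (z k 2 ^ (b : ℕ)) * r13 k
      · have h0 : v k (((0, b), 1), 1) * z k 0 = 0 := by
          rw [v_eq]
          simp only [Fin.val_zero, Fin.val_one, pow_zero, pow_one]
          linear_combination (-(z k 2 ^ (b : ℕ) * z k 1)) * r13 k +
            (-(z k 2 ^ (b : ℕ) * z k 3)) * r23 k + (z k 2 ^ (b : ℕ) * z k 2) * r3 k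
        rw [h0]; exact zero_mem _
    · have h0 : v k (((1, b), c), 1) * z k 0 = 0 := by
        rw [v_eq]
        simp only [Fin.val_zero, Fin.val_one, pow_zero, pow_one]
        linear_combination (-(z k 2 ^ (b : ℕ) * z k 1 ^ (c : ℕ) * z k 3)) * r13 k +
          (z k 2 ^ (b : ℕ) * z k 1 ^ (c : ℕ) * z k 1) * r3 k
      rw [h0]; exact zero_mem _

lemma vz_mem_1 (a b c d : Fin 2) : v k (((a, b), c), d) * z k 1 ∈ S k := by
  rcases fin2_cases c with rfl | rfl
  · refine Submodule.subset_span ⟨(((a, b), 1), d), ?_⟩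
    rw [v_eq, v_eq]
    simp only [Fin.val_zero, Fin.val_one, pow_zero, pow_one]
    ring
  · rcases fin2_cases a with rfl | rfl
    · rcases fin2_cases b with rfl | rfl
      · refine Submodule.subset_span ⟨(((1, 1), 0), d), ?_⟩
        rw [v_eq, v_eq]
        simp only [Fin.val_zero, Fin.val_one, pow_zero, pow_one]
        linear_combination (z k 0 ^ (d : ℕ)) * r23 k
      · have h0 : v k (((0, 1), 1), d) * z k 1 = 0 := by
          rw [v_eq]
          simp only [Fin.val_zero, Fin.val_one, pow_zero, pow_one]
          linear_combination (-(z k 0 ^ (d : ℕ) * z k 2)) * r23 k +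
            (z k 0 ^ (d : ℕ) * z k 3) * r2 k
        rw [h0]; exact zero_mem _
    · have h0 : v k (((1, b), 1), d) * z k 1 = 0 := by
        rw [v_eq]
        simp only [Fin.val_zero, Fin.val_one, pow_zero, pow_one]
        linear_combination (-(z k 2 ^ (b : ℕ) * z k 0 ^ (d : ℕ) * z k 3)) * r23 k +
          (z k 2 ^ (b : ℕ) * z k 2 * z k 0 ^ (d : ℕ)) * r3 k
      rw [h0]; exact zero_mem _

lemma vz_mem_2 (a b c d : Fin 2) : v k (((a, b), c), d) * z k 2 ∈ S k := by
  rcases fin2_cases b with rfl | rfl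
  · refine Submodule.subset_span ⟨(((a, 1), c), d), ?_⟩
    rw [v_eq, v_eq]
    simp only [Fin.val_zero, Fin.val_one, pow_zero, pow_one]
    ring
  · have h0 : v k (((a, 1), c), d) * z k 2 = 0 := by
      rw [v_eq]
      simp only [Fin.val_zero, Fin.val_one, pow_zero, pow_one]
      linear_combination (z k 3 ^ (a : ℕ) * z k 1 ^ (c : ℕ) * z k 0 ^ (d : ℕ)) * r2 k
    rw [h0]; exact zero_mem _

lemma vz_mem_3 (a b c d : Fin 2) : v k (((a, b), c), d) * z k 3 ∈ S k := by
  rcases fin2_cases a with rfl | rfl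
  · refine Submodule.subset_span ⟨(((1, b), c), d), ?_⟩
    rw [v_eq, v_eq]
    simp only [Fin.val_zero, Fin.val_one, pow_zero, pow_one]
    ring
  · have h0 : v k (((1, b), c), d) * z k 3 = 0 := by
      rw [v_eq]
      simp only [Fin.val_zero, Fin.val_one, pow_zero, pow_one]
      linear_combination (z k 2 ^ (b : ℕ) * z k 1 ^ (c : ℕ) * z k 0 ^ (d : ℕ)) * r3 k
    rw [h0]; exact zero_mem _

lemma mul_z_mem (i : Fin 4) (x : Q k) (hx : x ∈ S k) : x * z k i ∈ S k := by
  refine Submodule.span_induction ?_ ?_ ?_ ?_ hx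
  · rintro g ⟨⟨⟨⟨a, b⟩, c⟩, d⟩, rfl⟩
    fin_cases i
    · exact vz_mem_0 k a b c d
    · exact vz_mem_1 k a b c d
    · exact vz_mem_2 k a b c d
    · exact vz_mem_3 k a b c d
  · rw [zero_mul]; exact zero_mem _
  · intro a b _ _ ha hb; rw [add_mul]; exact add_mem ha hb
  · intro r a _ ha; rw [smul_mul_assoc]; exact Submodule.smul_mem _ _ ha

end
end PIE

namespace PIE
variable (k : Type*) [Field k]
noncomputable section

lemma S_eq_top : S k = ⊤ := by
  rw [eq_top_iff]
  rintro x -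
  obtain ⟨p, rfl⟩ := Ideal.Quotient.mk_surjective x
  induction p using MvPolynomial.induction_on with
  | C a =>
    have h1 : (1 : Q k) ∈ S k :=
      Submodule.subset_span ⟨(((0, 0), 0), 0), by rw [v_eq]; simp⟩
    have h : (Ideal.Quotient.mk (qI k)) (MvPolynomial.C a) = a • (1 : Q k) := by
      have h2 : (Ideal.Quotient.mk (qI k)) (MvPolynomial.C a) = algebraMap k (Q k) a := rfl
      rw [h2, Algebra.algebraMap_eq_smul_one]
    rw [h]
    exact Submodule.smul_mem _ _ h1
  | add p q hp hq =>
    rw [RingHom.map_add]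
    exact add_mem hp hq
  | mul_X p i hp =>
    rw [RingHom.map_mul]
    exact mul_z_mem k i _ hp

def basisQ : Module.Basis ι k (Q k) := Module.Basis.mk (v_li k) (by rw [← S, S_eq_top])

lemma finQ : FiniteDimensional k (Q k) :=
  Module.Finite.of_basis (basisQ k)

lemma finrankQ : Module.finrank k (Q k) = 16 := by
  rw [Module.finrank_eq_card_basis (basisQ k)]
  simp [ι]

end
end PIE


namespace PIE
variable (k : Type*) [Field k]
noncomputable section

def mI : Ideal (P' k) := Ideal.span {(X 0 : P' k), X 1, X 2, X 3}

variable {k}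

lemma g1_mem : (X 3 : P' k) ^ 2 ∈ qI k := Ideal.subset_span (by simp [Set.mem_insert_iff])
lemma g2_mem : (X 2 * X 3 - X 1 ^ 2 : P' k) ∈ qI k := Ideal.subset_span (by simp [Set.mem_insert_iff])
lemma g3_mem : ((X 2 : P' k) ^ 2) ∈ qI k := Ideal.subset_span (by simp [Set.mem_insert_iff])
lemma g4_mem : (X 1 * X 3 - X 0 ^ 2 : P' k) ∈ qI k := Ideal.subset_span (by simp [Set.mem_insert_iff])

lemma Xmem (i : Fin 4) : (X i : P' k) ∈ mI k := by
  fin_cases i <;> exact Ideal.subset_span (by simp [Set.mem_insert_iff])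

lemma mI_eq_ker : mI k = RingHom.ker (constantCoeff : P' k →+* k) := by
  have himg : (MvPolynomial.X '' (Set.univ : Set (Fin 4)) : Set (P' k)) = {X 0, X 1, X 2, X 3} := by
    ext f
    simp only [Set.image_univ, Set.mem_range, Set.mem_insert_iff, Set.mem_singleton_iff]
    constructor
    · rintro ⟨i, rfl⟩; fin_cases i <;> simp
    · rintro (rfl | rfl | rfl | rfl)
      exacts [⟨0, rfl⟩, ⟨1, rfl⟩, ⟨2, rfl⟩, ⟨3, rfl⟩]
  ext f
  rw [mI, ← himg, mem_ideal_span_X_image, RingHom.mem_ker, constantCoeff_eq]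
  constructor
  · intro h
    by_contra h0
    obtain ⟨i, -, hi⟩ := h 0 (mem_support_iff.mpr h0)
    simp at hi
  · intro h0 m hm
    have : m ≠ 0 := by rintro rfl; exact mem_support_iff.mp hm h0
    obtain ⟨i, hi⟩ := Finsupp.ne_iff.mp this
    exact ⟨i, Set.mem_univ i, by simpa using hi⟩

lemma mI_isMaximal : (mI k).IsMaximal := by
  rw [mI_eq_ker]
  exact RingHom.ker_isMaximal_of_surjective _ (fun a => ⟨C a, constantCoeff_C _ a⟩)

lemma qI_le_mI : qI k ≤ mI k := by
  rw [qI, Ideal.span_le]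
  rintro f (rfl | rfl | rfl | rfl)
  · exact Ideal.pow_mem_of_mem _ (Xmem 3) 2 (by norm_num)
  · exact sub_mem (Ideal.mul_mem_right _ _ (Xmem 2)) (Ideal.pow_mem_of_mem _ (Xmem 1) 2 (by norm_num))
  · exact Ideal.pow_mem_of_mem _ (Xmem 2) 2 (by norm_num)
  · exact sub_mem (Ideal.mul_mem_right _ _ (Xmem 1)) (Ideal.pow_mem_of_mem _ (Xmem 0) 2 (by norm_num))

lemma radical_qI : (qI k).radical = mI k := by
  apply le_antisymm
  · calc (qI k).radical ≤ (mI k).radical := Ideal.radical_mono qI_le_mI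
    _ = mI k := (mI_isMaximal.isPrime).radical
  · rw [mI, Ideal.span_le]
    rintro f (rfl | rfl | rfl | rfl)
    · refine ⟨4, ?_⟩
      have h : (X 0 : P' k) ^ 4 =
          X 1 ^ 2 * X 3 ^ 2 - (X 1 * X 3 + X 0 ^ 2) * (X 1 * X 3 - X 0 ^ 2) := by ring
      rw [h]
      exact sub_mem (Ideal.mul_mem_left _ _ g1_mem) (Ideal.mul_mem_left _ _ g4_mem)
    · refine ⟨4, ?_⟩
      have h : (X 1 : P' k) ^ 4 =
          X 3 ^ 2 * X 2 ^ 2 - (X 2 * X 3 + X 1 ^ 2) * (X 2 * X 3 - X 1 ^ 2) := by ring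
      rw [h]
      exact sub_mem (Ideal.mul_mem_left _ _ g3_mem) (Ideal.mul_mem_left _ _ g2_mem)
    · exact ⟨2, g3_mem⟩
    · exact ⟨2, g1_mem⟩

lemma qI_isPrimary : (qI k).IsPrimary := by
  apply Ideal.isPrimary_of_isMaximal_radical
  rw [radical_qI]
  exact mI_isMaximal


end
end PIE

/-- In `k[X₁,X₂,X₃,X₄]`, the ideal `q = (X₄², X₃X₄ - X₂², X₃², X₂X₄ - X₁²)` is primary,
its radical is the maximal ideal `m = (X₁,X₂,X₃,X₄)`, and the quotient ring is a
`k`-vector space of dimension `16 = 2⁴`. -/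
theorem primary_ideal_example_dimension_sixteen
    {k : Type*} [Field k] :
    (Ideal.span {(X 3 : MvPolynomial (Fin 4) k) ^ 2, X 2 * X 3 - X 1 ^ 2,
        X 2 ^ 2, X 1 * X 3 - X 0 ^ 2}).IsPrimary ∧
    (Ideal.span {(X 3 : MvPolynomial (Fin 4) k) ^ 2, X 2 * X 3 - X 1 ^ 2,
        X 2 ^ 2, X 1 * X 3 - X 0 ^ 2}).radical =
      Ideal.span {(X 0 : MvPolynomial (Fin 4) k), X 1, X 2, X 3} ∧
    (Ideal.span {(X 0 : MvPolynomial (Fin 4) k), X 1, X 2, X 3}).IsMaximal ∧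
    FiniteDimensional k (MvPolynomial (Fin 4) k ⧸
      Ideal.span {(X 3 : MvPolynomial (Fin 4) k) ^ 2, X 2 * X 3 - X 1 ^ 2,
        X 2 ^ 2, X 1 * X 3 - X 0 ^ 2}) ∧
    Module.finrank k (MvPolynomial (Fin 4) k ⧸
      Ideal.span {(X 3 : MvPolynomial (Fin 4) k) ^ 2, X 2 * X 3 - X 1 ^ 2,
        X 2 ^ 2, X 1 * X 3 - X 0 ^ 2}) = 16 :=
  ⟨PIE.qI_isPrimary, PIE.radical_qI, PIE.mI_isMaximal, PIE.finQ k, PIE.finrankQ k⟩
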